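/- arXiv:1910.01073 — 5 statements merged into one kernel-verified Lean document; each statement's English description precedes it below -/
import Mathlib

section
/- For real numbers x and y, if y lies in the interval [-x - log 10, -x + log 10] and |x| ≥ log n for some n ≥ 2 (with the parameter λ = 1, i.e., |x| ≥ log n), then max{cosh(x)/cosh(y), cosh(y)/cosh(x)} ≤ 11. -/
lemma cosh_div_cosh_le (a b : ℝ) (h : |a - b| ≤ Real.log 10) :
    Real.cosh a / Real.cosh b ≤ 11 := by
  have hb : 0 < Real.cosh b := Real.cosh_pos b
  rw [div_le_iff₀ hb]
  have h1 : Real.cosh a ≤ Real.cosh b * Real.exp |a - b| := by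
    have e : Real.cosh a = Real.cosh b * Real.cosh (a - b)
        + Real.sinh b * Real.sinh (a - b) := by
      rw [← Real.cosh_add]; ring_nf
    rw [e]
    have hs : Real.sinh b * Real.sinh (a - b) ≤ |Real.sinh b| * |Real.sinh (a - b)| := by
      calc Real.sinh b * Real.sinh (a - b) ≤ |Real.sinh b * Real.sinh (a - b)| := le_abs_self _
        _ = |Real.sinh b| * |Real.sinh (a - b)| := abs_mul _ _
    have hsc : |Real.sinh b| ≤ Real.cosh b := by
      rw [Real.abs_sinh, ← Real.cosh_abs b]
      have := Real.sinh_lt_cosh |b|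
      linarith [this]
    have hsa : |Real.sinh (a - b)| = Real.sinh |a - b| := Real.abs_sinh _
    have hca : Real.cosh (a - b) = Real.cosh |a - b| := (Real.cosh_abs _).symm
    have key : Real.cosh |a - b| + Real.sinh |a - b| = Real.exp |a - b| :=
      Real.cosh_add_sinh _
    nlinarith [Real.cosh_pos (x := a - b), Real.sinh_nonneg_iff.2 (abs_nonneg (a - b)),
      abs_nonneg (Real.sinh (a-b))]
  have h2 : Real.exp |a - b| ≤ 10 := by
    calc Real.exp |a - b| ≤ Real.exp (Real.log 10) := Real.exp_le_exp.2 h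
      _ = 10 := Real.exp_log (by norm_num)
  nlinarith

theorem stmt0 (n : ℕ) (hn : 2 ≤ n) (x y : ℝ)
    (hx : Real.log n ≤ |x|)
    (hy : y ∈ Set.Icc (-x - Real.log 10) (-x + Real.log 10)) :
    max (Real.cosh x / Real.cosh y) (Real.cosh y / Real.cosh x) ≤ 11 := by
  obtain ⟨h1, h2⟩ := hy
  have hd : |y - (-x)| ≤ Real.log 10 := abs_le.2 ⟨by linarith, by linarith⟩
  have hd' : |(-x) - y| ≤ Real.log 10 := by rw [abs_sub_comm]; exact hd
  have A : Real.cosh x / Real.cosh y ≤ 11 := by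
    rw [← Real.cosh_neg x]; exact cosh_div_cosh_le _ _ hd'
  have B : Real.cosh y / Real.cosh x ≤ 11 := by
    rw [← Real.cosh_neg x]; exact cosh_div_cosh_le _ _ hd
  exact max_le A B
end

section
/- For real numbers x and y with |x| ≥ log n (for n ≥ 2) and y NOT in the interval [-x - log 10, -x + log 10], we have |sinh(x) + sinh(y)| ≥ (8/9) · max{|sinh(x)|, |sinh(y)|}. -/
lemma key10 (a b : ℝ) (hb : 0 ≤ b) (h : b + Real.log 10 ≤ a) :
    10 * Real.sinh b ≤ Real.sinh a := by
  have hL : (0:ℝ) ≤ Real.log 10 := Real.log_nonneg (by norm_num)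
  have h1 : Real.sinh (b + Real.log 10) ≤ Real.sinh a := Real.sinh_le_sinh.mpr h
  rw [Real.sinh_add] at h1
  have hexp : Real.cosh (Real.log 10) + Real.sinh (Real.log 10) = 10 := by
    rw [Real.cosh_add_sinh]
    exact Real.exp_log (by norm_num)
  have hs : 0 ≤ Real.sinh b := Real.sinh_nonneg_iff.mpr hb
  have hc : Real.sinh b ≤ Real.cosh b := (Real.sinh_lt_cosh b).le
  have hsl : 0 ≤ Real.sinh (Real.log 10) := Real.sinh_nonneg_iff.mpr hL
  nlinarith

theorem stmt2 (n : ℕ) (hn : 2 ≤ n) (x y : ℝ)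
    (hx : Real.log n ≤ |x|)
    (hy : y ∉ Set.Icc (-x - Real.log 10) (-x + Real.log 10)) :
    (8 / 9 : ℝ) * max |Real.sinh x| |Real.sinh y| ≤ |Real.sinh x + Real.sinh y| := by
  have hL : (0:ℝ) < Real.log 10 := Real.log_pos (by norm_num)
  simp only [Set.mem_Icc, not_and, not_le] at hy
  rcases le_or_gt 0 x with hx0 | hx0 <;> rcases le_or_gt 0 y with hy0 | hy0
  · -- both nonneg
    have hs : 0 ≤ Real.sinh x := Real.sinh_nonneg_iff.mpr hx0
    have ht : 0 ≤ Real.sinh y := Real.sinh_nonneg_iff.mpr hy0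
    rw [abs_of_nonneg hs, abs_of_nonneg ht, abs_of_nonneg (add_nonneg hs ht)]
    have := max_le (le_add_of_nonneg_right ht) (le_add_of_nonneg_left hs)
    nlinarith [le_max_left (Real.sinh x) (Real.sinh y), le_max_right (Real.sinh x) (Real.sinh y)]
  · -- x ≥ 0, y < 0
    have hs : 0 ≤ Real.sinh x := Real.sinh_nonneg_iff.mpr hx0
    have ht : Real.sinh y ≤ 0 := by
      simpa using Real.sinh_le_sinh.mpr hy0.le
    rcases le_or_gt (-x - Real.log 10) y with h1 | h1
    · have h2 := hy h1
      have hk := key10 x (-y) (by linarith) (by linarith)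
      rw [Real.sinh_neg] at hk
      have hmax : max |Real.sinh x| |Real.sinh y| = Real.sinh x := by
        rw [abs_of_nonneg hs, abs_of_nonpos ht, max_eq_left]; linarith
      rw [hmax, abs_of_nonneg (by linarith)]
      linarith
    · have hk := key10 (-y) x hx0 (by linarith)
      rw [Real.sinh_neg] at hk
      have hmax : max |Real.sinh x| |Real.sinh y| = -Real.sinh y := by
        rw [abs_of_nonneg hs, abs_of_nonpos ht, max_eq_right]; linarith
      rw [hmax, abs_of_nonpos (by linarith)]
      linarith
  · -- x < 0, y ≥ 0
    have hs : Real.sinh x ≤ 0 := by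
      simpa using Real.sinh_le_sinh.mpr hx0.le
    have ht : 0 ≤ Real.sinh y := Real.sinh_nonneg_iff.mpr hy0
    rcases le_or_gt (-x - Real.log 10) y with h1 | h1
    · have h2 := hy h1
      have hk := key10 y (-x) (by linarith) (by linarith)
      rw [Real.sinh_neg] at hk
      have hmax : max |Real.sinh x| |Real.sinh y| = Real.sinh y := by
        rw [abs_of_nonpos hs, abs_of_nonneg ht, max_eq_right]; linarith
      rw [hmax, abs_of_nonneg (by linarith)]
      linarith
    · have hk := key10 (-x) y hy0 (by linarith)
      rw [Real.sinh_neg] at hk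
      have hmax : max |Real.sinh x| |Real.sinh y| = -Real.sinh x := by
        rw [abs_of_nonpos hs, abs_of_nonneg ht, max_eq_left]; linarith
      rw [hmax, abs_of_nonpos (by linarith)]
      linarith
  · -- both nonpos
    have hs : Real.sinh x ≤ 0 := by
      simpa using Real.sinh_le_sinh.mpr hx0.le
    have ht : Real.sinh y ≤ 0 := by
      simpa using Real.sinh_le_sinh.mpr hy0.le
    rw [abs_of_nonpos hs, abs_of_nonpos ht, abs_of_nonpos (by linarith)]
    nlinarith [le_max_left (-Real.sinh x) (-Real.sinh y), le_max_right (-Real.sinh x) (-Real.sinh y),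
      max_le (show -Real.sinh x ≤ -(Real.sinh x + Real.sinh y) by linarith)
        (show -Real.sinh y ≤ -(Real.sinh x + Real.sinh y) by linarith)]
end

section
/- Let n be a natural number, S ⊆ {1,...,n} a set of items, and v : {1,...,n} → [0,1] a valuation with v strictly decreasing (v₁ > v₂ > ... > vₙ). Then v(complement of S) - v(S) ≤ max over t ∈ {0,...,n} of (|complement(S) ∩ [t]| - |S ∩ [t]|), i.e., the cardinal envy is upper-bounded by the ordinal envy. -/
private lemma abel_bound : ∀ (n : ℕ) (w e : ℕ → ℝ) (M : ℝ),
    (∀ i, 0 ≤ w i) → (∀ i, w (i + 1) ≤ w i) →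
    (∀ t ≤ n, ∑ i ∈ Finset.range t, e i ≤ M) →
    ∑ i ∈ Finset.range n, e i * w i ≤ M * w 0 := by
  intro n
  induction n with
  | zero =>
    intro w e M hw0 _ hP
    simp only [Finset.range_zero, Finset.sum_empty]
    exact mul_nonneg (by simpa using hP 0 le_rfl) (hw0 0)
  | succ n ih =>
    intro w e M hw0 hwd hP
    have hM0 : e 0 ≤ M := by simpa using hP 1 (Nat.succ_le_succ (Nat.zero_le n))
    have key := ih (fun i => w (i + 1)) (fun i => e (i + 1)) (M - e 0)
      (fun i => hw0 _) (fun i => hwd _) ?_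
    · rw [Finset.sum_range_succ']
      have hw10 : w 1 ≤ w 0 := hwd 0
      have h1 : (M - e 0) * w 1 ≤ (M - e 0) * w 0 :=
        mul_le_mul_of_nonneg_left hw10 (by linarith)
      nlinarith [key]
    · intro t ht
      have h := hP (t + 1) (Nat.succ_le_succ ht)
      rw [Finset.sum_range_succ'] at h
      linarith

theorem stmt9 (n : ℕ) (S : Finset (Fin n)) (v : Fin n → ℝ)
    (hv : ∀ i, v i ∈ Set.Icc (0 : ℝ) 1) (hdec : StrictAnti v) :
    (∑ i ∈ Sᶜ, v i) - ∑ i ∈ S, v i ≤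
      (((Finset.range (n + 1)).sup' ⟨0, Finset.mem_range.mpr (Nat.succ_pos n)⟩ fun t =>
        ((Finset.univ.filter fun i : Fin n => i.val < t ∧ i ∉ S).card : ℤ)
          - ((Finset.univ.filter fun i : Fin n => i.val < t ∧ i ∈ S).card : ℤ)) : ℝ) := by
  set F : ℕ → ℤ := fun t =>
        ((Finset.univ.filter fun i : Fin n => i.val < t ∧ i ∉ S).card : ℤ)
          - ((Finset.univ.filter fun i : Fin n => i.val < t ∧ i ∈ S).card : ℤ) with hF
  set M : ℤ := (Finset.range (n + 1)).sup' ⟨0, Finset.mem_range.mpr (Nat.succ_pos n)⟩ F with hMdef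
  set w : ℕ → ℝ := fun i => if h : i < n then v ⟨i, h⟩ else 0 with hw
  set e : ℕ → ℝ := fun i =>
    if h : i < n then (if (⟨i, h⟩ : Fin n) ∈ S then (-1 : ℝ) else 1) else 0 with he
  have hw0 : ∀ i, 0 ≤ w i := by
    intro i; simp only [hw]; split
    · exact (hv _).1
    · exact le_refl 0
  have hwd : ∀ i, w (i + 1) ≤ w i := by
    intro i; simp only [hw]
    split
    · rename_i h
      have h' : i < n := Nat.lt_of_succ_lt h
      rw [dif_pos h']
      exact hdec.antitone (by simp [Fin.le_def])
    · exact hw0 i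
  have hM0 : (0 : ℤ) ≤ M := by
    have h0 := Finset.le_sup' F (Finset.mem_range.mpr (Nat.succ_pos n))
    have hF0 : F 0 = 0 := by simp [hF]
    rw [hF0] at h0
    exact h0
  have hP : ∀ t ≤ n, ∑ i ∈ Finset.range t, e i ≤ (M : ℝ) := by
    intro t ht
    have h1 : ∑ i ∈ Finset.range t, e i
        = ∑ i : Fin n, (if i.val < t then (if i ∈ S then (-1 : ℝ) else 1) else 0) := by
      have step : ∀ i : Fin n,
          (if i.val < t then (if i ∈ S then (-1 : ℝ) else 1) else 0)
            = (fun j => if j < t then e j else 0) i.val := by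
        intro i
        simp only [he, i.isLt, dif_pos, Fin.eta]
      rw [Finset.sum_congr rfl (fun i _ => step i),
        Fin.sum_univ_eq_sum_range (fun j => if j < t then e j else 0) n]
      rw [← Finset.sum_subset (Finset.range_subset_range.mpr ht)
        (fun i _ hi => if_neg (by simpa using hi))]
      exact (Finset.sum_congr rfl (fun i hi => (if_pos (Finset.mem_range.mp hi)).symm))
    have h2 : ∑ i : Fin n, (if i.val < t then (if i ∈ S then (-1 : ℝ) else 1) else 0)
        = ((F t : ℤ) : ℝ) := by
      simp only [hF]
      push_cast
      rw [Finset.card_filter, Finset.card_filter]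
      push_cast
      rw [← Finset.sum_sub_distrib]
      refine Finset.sum_congr rfl (fun i _ => ?_)
      by_cases h : i.val < t <;> by_cases hs : i ∈ S <;> simp [h, hs]
    rw [h1, h2]
    exact_mod_cast Int.cast_le.mpr
      (Finset.le_sup' F (Finset.mem_range.mpr (Nat.lt_succ_of_le ht)))
  have hL : (∑ i ∈ Sᶜ, v i) - ∑ i ∈ S, v i = ∑ i ∈ Finset.range n, e i * w i := by
    rw [← Fin.sum_univ_eq_sum_range (fun j => e j * w j) n]
    have step : ∀ i : Fin n, (fun j => e j * w j) i.val
        = (if i ∈ S then (-1 : ℝ) else 1) * v i := by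
      intro i
      simp only [he, hw, i.isLt, dif_pos, Fin.eta]
    rw [Finset.sum_congr rfl (fun i _ => step i)]
    rw [← Finset.sum_filter_add_sum_filter_not Finset.univ (· ∈ S)
      (fun i => (if i ∈ S then (-1 : ℝ) else 1) * v i)]
    have e1 : Finset.univ.filter (· ∈ S) = S := by simp [Finset.filter_mem_eq_inter]
    have e2 : Finset.univ.filter (fun i => ¬ i ∈ S) = Sᶜ := by
      ext i; simp
    rw [e1, e2]
    have e3 : ∑ i ∈ S, (if i ∈ S then (-1 : ℝ) else 1) * v i = ∑ i ∈ S, -v i :=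
      Finset.sum_congr rfl (fun i hi => by rw [if_pos hi]; ring)
    have e4 : ∑ i ∈ Sᶜ, (if i ∈ S then (-1 : ℝ) else 1) * v i = ∑ i ∈ Sᶜ, v i :=
      Finset.sum_congr rfl (fun i hi => by
        rw [if_neg (Finset.mem_compl.mp hi)]; ring)
    rw [e3, e4, Finset.sum_neg_distrib]
    ring
  have hAbel := abel_bound n w e (M : ℝ) hw0 hwd hP
  have hw01 : w 0 ≤ 1 := by
    simp only [hw]; split
    · exact (hv _).2
    · exact zero_le_one
  have hMr : (0 : ℝ) ≤ (M : ℝ) := by exact_mod_cast hM0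
  have hfinal : (∑ i ∈ Sᶜ, v i) - ∑ i ∈ S, v i ≤ (M : ℝ) := by
    calc (∑ i ∈ Sᶜ, v i) - ∑ i ∈ S, v i = ∑ i ∈ Finset.range n, e i * w i := hL
      _ ≤ (M : ℝ) * w 0 := hAbel
      _ ≤ (M : ℝ) * 1 := mul_le_mul_of_nonneg_left hw01 hMr
      _ = (M : ℝ) := mul_one _
  refine le_trans hfinal (le_of_eq ?_)
  rw [hMdef]
  refine (Finset.comp_sup'_eq_sup'_comp _ (Int.cast : ℤ → ℝ)
    (fun x y => by simp [Int.cast_max])).trans ?_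
  refine Finset.sup'_congr _ rfl (fun t _ => ?_)
  simp only [Function.comp, hF]
  push_cast
  ring
end

section
/- Let S ⊆ {1,...,n}, and let envy_O(S) = max over t ∈ {0,...,n} of (|complement(S) ∩ [t]| - |S ∩ [t]|). For every δ > 0 there exists a strictly decreasing valuation v : {1,...,n} → [0,1] such that v(complement S) - v(S) ≥ envy_O(S) - δ. -/
theorem stmt10 (n : ℕ) (S : Finset (Fin n)) (δ : ℝ) (hδ : 0 < δ) :
    ∃ v : Fin n → ℝ, StrictAnti v ∧ (∀ i, v i ∈ Set.Icc (0 : ℝ) 1) ∧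
      (((Finset.range (n + 1)).sup' Finset.nonempty_range_add_one fun t =>
        ((Finset.univ.filter fun i : Fin n => i.val < t ∧ i ∉ S).card : ℤ)
          - ((Finset.univ.filter fun i : Fin n => i.val < t ∧ i ∈ S).card : ℤ)) : ℝ) - δ
        ≤ (∑ i ∈ Sᶜ, v i) - ∑ i ∈ S, v i := by
  obtain ⟨t, ht, hts⟩ := Finset.exists_mem_eq_sup' Finset.nonempty_range_add_one
    (fun t => ((((Finset.univ.filter fun i : Fin n => i.val < t ∧ i ∉ S).card : ℤ) : ℝ)
          - (((Finset.univ.filter fun i : Fin n => i.val < t ∧ i ∈ S).card : ℤ) : ℝ)))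
  have htn : t ≤ n := Nat.lt_succ_iff.mp (Finset.mem_range.mp ht)
  set ε : ℝ := min δ 1 / (2 * (n + 1) ^ 2) with hεdef
  have hεpos : 0 < ε := by positivity
  have hε1 : ε ≤ 1 / (2 * (n + 1) ^ 2) := by
    apply div_le_div_of_nonneg_right (min_le_right δ 1)
    positivity
  have hnε : (n : ℝ) * ε ≤ 1 / 2 := by
    have h1 : (n : ℝ) * ε ≤ (n : ℝ) * (1 / (2 * (n + 1) ^ 2)) := by
      apply mul_le_mul_of_nonneg_left hε1 (by positivity)
    have h2 : (n : ℝ) * (1 / (2 * ((n : ℝ) + 1) ^ 2)) ≤ 1 / 2 := by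
      rw [mul_one_div, div_le_div_iff₀ (by positivity) (by norm_num : (0:ℝ) < 2)]
      nlinarith [sq_nonneg ((n : ℝ) + 1), Nat.cast_nonneg (α := ℝ) n]
    linarith
  have hn2ε : (n : ℝ) * ((n : ℝ) * ε) ≤ δ := by
    have h1 : ε ≤ δ / (2 * (n + 1) ^ 2) := by
      apply div_le_div_of_nonneg_right (min_le_left δ 1)
      positivity
    have h2 : (n : ℝ) * ((n : ℝ) * ε) ≤ (n : ℝ) * ((n : ℝ) * (δ / (2 * (n + 1) ^ 2))) := by
      apply mul_le_mul_of_nonneg_left _ (Nat.cast_nonneg n)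
      apply mul_le_mul_of_nonneg_left h1 (Nat.cast_nonneg n)
    have h3 : (n : ℝ) * ((n : ℝ) * (δ / (2 * (n + 1) ^ 2))) ≤ δ := by
      rw [div_eq_mul_inv]
      have hnn : (0:ℝ) ≤ (n:ℝ) := Nat.cast_nonneg n
      have key : (n : ℝ) * (n : ℝ) ≤ 2 * ((n:ℝ) + 1) ^ 2 := by nlinarith
      have hpos : (0:ℝ) < 2 * ((n:ℝ) + 1) ^ 2 := by positivity
      calc (n : ℝ) * ((n : ℝ) * (δ * (2 * (↑n + 1) ^ 2)⁻¹))
          = ((n:ℝ) * (n:ℝ)) * (2 * ((n:ℝ) + 1) ^ 2)⁻¹ * δ := by push_cast; ring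
        _ ≤ (2 * ((n:ℝ) + 1) ^ 2) * (2 * ((n:ℝ) + 1) ^ 2)⁻¹ * δ := by
            apply mul_le_mul_of_nonneg_right _ hδ.le
            apply mul_le_mul_of_nonneg_right key (by positivity)
        _ = δ := by field_simp
    linarith
  refine ⟨fun i => if (i : ℕ) < t then 1 - ((i : ℕ) + 1) * ε else ((n : ℝ) - (i : ℕ)) * ε,
    ?_, ?_, ?_⟩
  · -- StrictAnti
    intro i j hij
    have hij' : (i : ℕ) < (j : ℕ) := hij
    by_cases hi : (i : ℕ) < t <;> by_cases hj : (j : ℕ) < t <;>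
      simp only [hi, hj, if_true, if_false, if_pos, if_neg]
    · -- both < t
      have : ((i : ℕ) + 1 : ℝ) < ((j : ℕ) + 1 : ℝ) := by exact_mod_cast Nat.succ_lt_succ hij'
      nlinarith
    · -- i < t, j ≥ t : value at j is ((n - j) ε < n ε ≤ 1/2 ≤ 1 - n ε ≤ 1 - (i+1) ε
      have hiplus : ((i : ℕ) + 1 : ℝ) ≤ (n : ℝ) := by
        have : (i : ℕ) + 1 ≤ n := i.isLt
        exact_mod_cast this
      have hj1 : (1 : ℕ) ≤ (j : ℕ) := Nat.one_le_iff_ne_zero.mpr (by omega)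
      have hjr : ((n : ℝ) - (j : ℕ)) ≤ (n : ℝ) - 1 := by
        have : (1 : ℝ) ≤ ((j : ℕ) : ℝ) := by exact_mod_cast hj1
        linarith
      have h1 : ((n : ℝ) - (j : ℕ)) * ε ≤ ((n : ℝ) - 1) * ε := by
        apply mul_le_mul_of_nonneg_right hjr hεpos.le
      have h2 : ((i : ℕ) + 1 : ℝ) * ε ≤ (n : ℝ) * ε := by
        apply mul_le_mul_of_nonneg_right hiplus hεpos.le
      nlinarith
    · omega
    · -- both ≥ t
      have : ((i : ℕ) : ℝ) < ((j : ℕ) : ℝ) := by exact_mod_cast hij'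
      nlinarith
  · -- membership in Icc
    intro i
    constructor
    · by_cases hi : (i : ℕ) < t <;> simp only [hi, if_true, if_false]
      · have h2 : ((i : ℕ) + 1 : ℝ) * ε ≤ (n : ℝ) * ε := by
          apply mul_le_mul_of_nonneg_right _ hεpos.le
          have : (i : ℕ) + 1 ≤ n := i.isLt
          exact_mod_cast this
        linarith
      · have : ((i : ℕ) : ℝ) ≤ (n : ℝ) := by exact_mod_cast (i.isLt.le)
        nlinarith
    · by_cases hi : (i : ℕ) < t <;> simp only [hi, if_true, if_false]
      · have : (0:ℝ) ≤ ((i : ℕ) + 1 : ℝ) * ε := by positivity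
        linarith
      · have h1 : ((n : ℝ) - (i : ℕ)) * ε ≤ (n : ℝ) * ε := by
          apply mul_le_mul_of_nonneg_right _ hεpos.le
          have : (0:ℝ) ≤ ((i : ℕ) : ℝ) := Nat.cast_nonneg _
          linarith
        linarith
  · -- main inequality
    rw [hts]
    set χ : Fin n → ℝ := fun i => if (i : ℕ) < t then 1 else 0 with hχ
    set v : Fin n → ℝ := fun i =>
      if (i : ℕ) < t then 1 - ((i : ℕ) + 1) * ε else ((n : ℝ) - (i : ℕ)) * ε with hv
    have hlow : ∀ i : Fin n, χ i - (n : ℝ) * ε ≤ v i := by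
      intro i
      by_cases hi : (i : ℕ) < t <;> simp only [hχ, hv, hi, if_true, if_false]
      · have : ((i : ℕ) + 1 : ℝ) * ε ≤ (n : ℝ) * ε := by
          apply mul_le_mul_of_nonneg_right _ hεpos.le
          have : (i : ℕ) + 1 ≤ n := i.isLt
          exact_mod_cast this
        linarith
      · have h1 : (0:ℝ) ≤ ((n : ℝ) - (i : ℕ)) * ε := by
          apply mul_nonneg _ hεpos.le
          have : ((i : ℕ) : ℝ) ≤ (n : ℝ) := by exact_mod_cast (i.isLt.le)
          linarith
        have : (0:ℝ) ≤ (n : ℝ) * ε := by positivity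
        linarith
    have hup : ∀ i : Fin n, v i ≤ χ i + (n : ℝ) * ε := by
      intro i
      by_cases hi : (i : ℕ) < t <;> simp only [hχ, hv, hi, if_true, if_false]
      · have h1 : (0:ℝ) ≤ ((i : ℕ) + 1 : ℝ) * ε := by positivity
        have : (0:ℝ) ≤ (n : ℝ) * ε := by positivity
        linarith
      · have : ((n : ℝ) - (i : ℕ)) * ε ≤ (n : ℝ) * ε := by
          apply mul_le_mul_of_nonneg_right _ hεpos.le
          have : (0:ℝ) ≤ ((i : ℕ) : ℝ) := Nat.cast_nonneg _
          linarith
        linarith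
    have hsum1 : ∑ i ∈ Sᶜ, (χ i - (n : ℝ) * ε) ≤ ∑ i ∈ Sᶜ, v i :=
      Finset.sum_le_sum fun i _ => hlow i
    have hsum2 : ∑ i ∈ S, v i ≤ ∑ i ∈ S, (χ i + (n : ℝ) * ε) :=
      Finset.sum_le_sum fun i _ => hup i
    have hχc : ∑ i ∈ Sᶜ, χ i =
        ((Finset.univ.filter fun i : Fin n => i.val < t ∧ i ∉ S).card : ℝ) := by
      rw [hχ, Finset.sum_boole]
      congr 1
      congr 1
      ext i
      simp [Finset.mem_filter, and_comm]
    have hχs : ∑ i ∈ S, χ i =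
        ((Finset.univ.filter fun i : Fin n => i.val < t ∧ i ∈ S).card : ℝ) := by
      rw [hχ, Finset.sum_boole]
      congr 1
      congr 1
      ext i
      simp [Finset.mem_filter, and_comm]
    have hcards : (Sᶜ.card : ℝ) + (S.card : ℝ) = n := by
      have := Finset.card_add_card_compl S
      have h : S.card + Sᶜ.card = n := by simpa using this
      push_cast [← h]
      ring
    have expand1 : ∑ i ∈ Sᶜ, (χ i - (n : ℝ) * ε) =
        (∑ i ∈ Sᶜ, χ i) - (Sᶜ.card : ℝ) * ((n : ℝ) * ε) := by
      rw [Finset.sum_sub_distrib, Finset.sum_const, nsmul_eq_mul]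
    have expand2 : ∑ i ∈ S, (χ i + (n : ℝ) * ε) =
        (∑ i ∈ S, χ i) + (S.card : ℝ) * ((n : ℝ) * ε) := by
      rw [Finset.sum_add_distrib, Finset.sum_const, nsmul_eq_mul]
    have hnε0 : (0:ℝ) ≤ (n : ℝ) * ε := by positivity
    have herr : ((Sᶜ.card : ℝ) + (S.card : ℝ)) * ((n : ℝ) * ε) ≤ δ := by
      rw [hcards]; exact hn2ε
    rw [add_mul] at herr
    rw [hχc] at expand1
    rw [hχs] at expand2
    push_cast
    linarith [hsum1, hsum2, expand1, expand2, herr]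
end

section
/- Let S ⊆ {1,...,n} and define the greedy cancellation procedure: initialize T = complement of S; iterate over i ∈ S in increasing index order (i.e., decreasing value), and at each step remove from T the smallest index j ∈ T with j > i (if one exists). Then the final size |T| equals max over t ∈ {0,...,n} of (|complement(S) ∩ [t]| - |S ∩ [t]|). -/
namespace Stmt11

variable {n : ℕ}

def step (T : Finset (Fin n)) (i : Fin n) : Finset (Fin n) :=
  if h : (T.filter fun j => i < j).Nonempty then
    T.erase ((T.filter fun j => i < j).min' h)
  else T

def cnt (T : Finset (Fin n)) (t : ℕ) : ℤ :=
  ((T.filter fun j : Fin n => (j : ℕ) < t).card : ℤ)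

def lcnt (l : List (Fin n)) (t : ℕ) : ℤ :=
  (l.countP fun j : Fin n => decide ((j : ℕ) < t) : ℤ)

lemma cnt_le (T : Finset (Fin n)) (t : ℕ) : cnt T t ≤ T.card := by
  unfold cnt
  exact_mod_cast Finset.card_filter_le _ _

lemma cnt_nonneg (T : Finset (Fin n)) (t : ℕ) : 0 ≤ cnt T t := Int.natCast_nonneg _

lemma lcnt_nonneg (l : List (Fin n)) (t : ℕ) : 0 ≤ lcnt l t := Int.natCast_nonneg _

lemma lcnt_cons (i : Fin n) (l : List (Fin n)) (t : ℕ) :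
    lcnt (i :: l) t = lcnt l t + (if (i : ℕ) < t then 1 else 0) := by
  simp only [lcnt, List.countP_cons]
  split <;> rename_i h <;> simp at h <;> simp [h]

lemma lcnt_zero (l : List (Fin n)) (i : Fin n) (h : ∀ j ∈ l, i < j) :
    lcnt l (i : ℕ) = 0 := by
  simp only [lcnt]
  norm_cast
  rw [List.countP_eq_zero]
  intro j hj
  have : i < j := h j hj
  simp only [decide_eq_true_eq]
  exact fun hc => absurd (lt_trans hc this) (lt_irrefl _)

lemma cnt_erase (T : Finset (Fin n)) (m : Fin n) (hm : m ∈ T) (t : ℕ) :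
    cnt (T.erase m) t = cnt T t - (if (m : ℕ) < t then 1 else 0) := by
  simp only [cnt, Finset.filter_erase]
  by_cases h : (m : ℕ) < t
  · have hmem : m ∈ T.filter fun j : Fin n => (j : ℕ) < t := Finset.mem_filter.2 ⟨hm, h⟩
    rw [Finset.card_erase_of_mem hmem]
    have hpos : 0 < (T.filter fun j : Fin n => (j : ℕ) < t).card := Finset.card_pos.2 ⟨m, hmem⟩
    rw [if_pos h]
    omega
  · rw [Finset.erase_eq_of_notMem (by simp [Finset.mem_filter, h]), if_neg h]
    ring

lemma key (l : List (Fin n)) : ∀ (T : Finset (Fin n)), l.Pairwise (· < ·) →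
    (∀ i ∈ l, i ∉ T) →
    ((l.foldl step T).card : ℤ) =
      (Finset.range (n + 1)).sup' Finset.nonempty_range_add_one
        (fun t => cnt T t - lcnt l t) := by
  induction l with
  | nil =>
    intro T _ _
    simp only [List.foldl_nil, lcnt, List.countP_nil, Nat.cast_zero, sub_zero]
    apply le_antisymm
    · refine Finset.le_sup'_of_le _ (Finset.self_mem_range_succ n) (le_of_eq ?_)
      unfold cnt
      rw [Finset.filter_true_of_mem (fun (j : Fin n) _ => j.isLt)]
    · exact Finset.sup'_le _ _ fun t _ => cnt_le T t
  | cons i l ih =>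
    intro T hs hd
    have hlt : ∀ j ∈ l, i < j := fun j hj => (List.rel_of_pairwise_cons hs) hj
    have hiT : i ∉ T := hd i (List.mem_cons_self)
    have hin : (i : ℕ) ∈ Finset.range (n + 1) :=
      Finset.mem_range.2 (Nat.lt_succ_of_lt i.isLt)
    rw [List.foldl_cons]
    by_cases h : (T.filter fun j => i < j).Nonempty
    · -- removal case
      set m := (T.filter fun j => i < j).min' h with hmdef
      have hmf : m ∈ T.filter fun j => i < j := Finset.min'_mem _ h
      have hmT : m ∈ T := (Finset.mem_filter.1 hmf).1
      have him : i < m := (Finset.mem_filter.1 hmf).2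
      have him' : (i : ℕ) < (m : ℕ) := him
      have hstep : step T i = T.erase m := by
        simp only [step, dif_pos h, hmdef]
      rw [hstep, ih (T.erase m) hs.of_cons
        (fun j hj hjm => hd j (List.mem_cons_of_mem i hj) (Finset.mem_erase.1 hjm).2)]
      apply le_antisymm
      · apply Finset.sup'_le
        intro t ht
        rw [cnt_erase T m hmT t]
        rcases lt_or_ge (m : ℕ) t with h2 | h2
        · have h1 : (i : ℕ) < t := lt_trans him' h2
          refine le_trans (le_of_eq ?_)
            (Finset.le_sup' (fun t => cnt T t - lcnt (i :: l) t) ht)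
          rw [lcnt_cons, if_pos h1, if_pos h2]
          ring
        · rcases lt_or_ge (i : ℕ) t with h1 | h1
          · -- i < t ≤ m
            refine le_trans ?_
              (Finset.le_sup' (fun t => cnt T t - lcnt (i :: l) t) hin)
            rw [if_neg (not_lt.2 h2)]
            have hbi : cnt T (i : ℕ) - lcnt (i :: l) (i : ℕ) = cnt T (i : ℕ) := by
              rw [lcnt_cons, if_neg (lt_irrefl (i : ℕ)), lcnt_zero l i hlt]
              ring
            rw [hbi]
            have hcnt : cnt T t = cnt T (i : ℕ) := by
              have hset : (T.filter fun j : Fin n => (j : ℕ) < t)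
                  = T.filter fun j : Fin n => (j : ℕ) < (i : ℕ) := by
                ext j
                simp only [Finset.mem_filter, and_congr_right_iff]
                intro hj
                constructor
                · intro hjt
                  by_contra hji
                  push_neg at hji
                  have hij : i < j := by
                    rcases eq_or_lt_of_le (show i ≤ j from hji) with he | hl
                    · exact absurd (he ▸ hj) hiT
                    · exact hl
                  have hmj : (m : ℕ) ≤ (j : ℕ) :=
                    Finset.min'_le _ j (Finset.mem_filter.2 ⟨hj, hij⟩)
                  omega
                · intro hji
                  exact lt_trans hji h1
              simp only [cnt, hset]
            rw [hcnt]
            have := lcnt_nonneg l t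
            linarith
          · -- t ≤ i
            refine le_trans (le_of_eq ?_)
              (Finset.le_sup' (fun t => cnt T t - lcnt (i :: l) t) ht)
            rw [if_neg (by omega : ¬ (m : ℕ) < t), lcnt_cons,
              if_neg (by omega : ¬ (i : ℕ) < t)]
            ring
      · apply Finset.sup'_le
        intro t ht
        refine le_trans ?_
          (Finset.le_sup' (fun t => cnt (T.erase m) t - lcnt l t) ht)
        rw [cnt_erase T m hmT t, lcnt_cons]
        rcases lt_or_ge (m : ℕ) t with h2 | h2
        · rw [if_pos h2, if_pos (lt_trans him' h2)]
          linarith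
        · rw [if_neg (not_lt.2 h2)]
          have : (0 : ℤ) ≤ (if (i : ℕ) < t then 1 else 0) := by split <;> norm_num
          linarith
    · -- no removal
      have hstep : step T i = T := by simp only [step, dif_neg h]
      rw [hstep, ih T hs.of_cons (fun j hj => hd j (List.mem_cons_of_mem i hj))]
      have hTsmall : ∀ j ∈ T, (j : ℕ) < (i : ℕ) := by
        intro j hj
        rcases lt_trichotomy ((j : ℕ)) ((i : ℕ)) with h1 | h1 | h1
        · exact h1
        · exact absurd (Fin.ext h1 : j = i) (fun e => hiT (e ▸ hj))
        · exact absurd ⟨j, Finset.mem_filter.2 ⟨hj, h1⟩⟩ h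
      have hcntfull : ∀ t, (i : ℕ) ≤ t → cnt T t = T.card := by
        intro t hti
        unfold cnt
        congr 1
        rw [Finset.filter_true_of_mem]
        intro j hj
        exact lt_of_lt_of_le (hTsmall j hj) hti
      apply le_antisymm
      · apply Finset.sup'_le
        intro t ht
        rcases lt_or_ge (i : ℕ) t with h1 | h1
        · refine le_trans ?_
            (Finset.le_sup' (fun t => cnt T t - lcnt (i :: l) t) hin)
          rw [lcnt_cons, if_neg (lt_irrefl (i : ℕ)), lcnt_zero l i hlt,
            hcntfull t h1.le, hcntfull (i : ℕ) le_rfl]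
          have := lcnt_nonneg l t
          linarith
        · refine le_trans (le_of_eq ?_)
            (Finset.le_sup' (fun t => cnt T t - lcnt (i :: l) t) ht)
          rw [lcnt_cons, if_neg (not_lt.2 h1)]
          ring
      · apply Finset.sup'_le
        intro t ht
        refine le_trans ?_ (Finset.le_sup' (fun t => cnt T t - lcnt l t) ht)
        rw [lcnt_cons]
        have : (0 : ℤ) ≤ (if (i : ℕ) < t then 1 else 0) := by split <;> norm_num
        linarith

end Stmt11

/-- The greedy cancellation procedure: start with `T = Sᶜ`; iterate over the items of `S`
in increasing index order (decreasing value), each time removing from `T` the smallest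
index `j ∈ T` with `j > i`, if one exists. -/
def cancelT (n : ℕ) (S : Finset (Fin n)) : Finset (Fin n) :=
  (S.sort (· ≤ ·)).foldl
    (fun T i =>
      if h : (T.filter fun j => i < j).Nonempty then
        T.erase ((T.filter fun j => i < j).min' h)
      else T) Sᶜ

theorem stmt11 (n : ℕ) (S : Finset (Fin n)) :
    ((cancelT n S).card : ℤ) =
      (Finset.range (n + 1)).sup' Finset.nonempty_range_add_one fun t =>
        ((Finset.univ.filter fun i : Fin n => i.val < t ∧ i ∉ S).card : ℤ)
          - ((Finset.univ.filter fun i : Fin n => i.val < t ∧ i ∈ S).card : ℤ) := by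
  have h0 : cancelT n S = (S.sort (· ≤ ·)).foldl Stmt11.step Sᶜ := rfl
  rw [h0, Stmt11.key (S.sort (· ≤ ·)) Sᶜ (Finset.sortedLT_sort S).pairwise
    (fun i hi hic => (Finset.mem_compl.1 hic) ((Finset.mem_sort _).1 hi))]
  refine Finset.sup'_congr _ rfl ?_
  intro t ht
  have hc : Stmt11.cnt Sᶜ t
      = ((Finset.univ.filter fun i : Fin n => i.val < t ∧ i ∉ S).card : ℤ) := by
    unfold Stmt11.cnt
    congr 2
    ext j
    simp [Finset.mem_filter, and_comm]
  have hl : Stmt11.lcnt (S.sort (· ≤ ·)) t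
      = ((Finset.univ.filter fun i : Fin n => i.val < t ∧ i ∈ S).card : ℤ) := by
    unfold Stmt11.lcnt
    congr 1
    rw [List.Perm.countP_eq _ (Finset.sort_perm_toList S (· ≤ ·))]
    rw [← Multiset.coe_countP, Finset.coe_toList, Multiset.countP_eq_card_filter]
    have : Finset.filter (fun i : Fin n => i.val < t ∧ i ∈ S) Finset.univ
        = Finset.filter (fun i : Fin n => (i : ℕ) < t) S := by
      ext j
      simp [Finset.mem_filter, and_comm]
    rw [this]
    rfl
  rw [hc, hl]
end
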